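/- For Re(α) > 0, Re(β₁) > 0 and small x, y, z, H_A(α, β₁, β₂; γ₁, γ₂; x, y, z) = [1/(Γ(α)Γ(β₁))] ∫₀^∞∫₀^∞ e^{-u₁-u₂} u₁^{α-1} u₂^{β₁-1} ₀F₁(γ₁; x u₁ u₂) ₁F₁(β₂; γ₂; y u₂ + z u₁) du₁ du₂. -/

import Mathlib

open Complex MeasureTheory

set_option maxHeartbeats 1000000

/-- Pochhammer symbol `(x)_k`. -/
noncomputable def poch (x : ℂ) (k : ℕ) : ℂ := (ascPochhammer ℂ k).eval x

lemma poch_zero (x : ℂ) : poch x 0 = 1 := by simp [poch]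

lemma poch_succ (x : ℂ) (k : ℕ) : poch x (k + 1) = poch x k * (x + k) := by
  simpa [poch] using ascPochhammer_succ_eval k x

lemma poch_one (k : ℕ) : poch 1 k = (k.factorial : ℂ) := by
  simp [poch]

lemma poch_one_ne (k : ℕ) : poch 1 k ≠ 0 := by
  rw [poch_one]; exact_mod_cast Nat.cast_ne_zero.mpr k.factorial_ne_zero

/-- Master ratio bound for Pochhammer symbols. -/
lemma poch_ratio (β γ : ℂ) : ∃ K : ℝ, 0 < K ∧ ∀ k : ℕ, poch γ k ≠ 0 →
    ‖poch β k‖ ≤ K * 2 ^ k * ‖poch γ k‖ := by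
  set J : ℕ := ⌈‖β‖ + 2 * ‖γ‖⌉₊ with hJ
  have key : ∀ j : ℕ, J ≤ j → ‖β + (j : ℂ)‖ ≤ 2 * ‖γ + (j : ℂ)‖ := by
    intro j hj
    have h1 : ‖β + (j : ℂ)‖ ≤ ‖β‖ + j := by
      simpa using norm_add_le β (j : ℂ)
    have h2 : (j : ℝ) - ‖γ‖ ≤ ‖γ + (j : ℂ)‖ := by
      have h3 : ‖(j : ℂ)‖ ≤ ‖γ + (j : ℂ)‖ + ‖γ‖ := by
        calc ‖(j : ℂ)‖ = ‖(γ + (j : ℂ)) + (-γ)‖ := by ring_nf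
          _ ≤ ‖γ + (j : ℂ)‖ + ‖-γ‖ := norm_add_le _ _
          _ = ‖γ + (j : ℂ)‖ + ‖γ‖ := by rw [norm_neg]
      have h4 : ‖(j : ℂ)‖ = (j : ℝ) := by
        simp
      linarith
    have h5 : ‖β‖ + 2 * ‖γ‖ ≤ (J : ℝ) := Nat.le_ceil _
    have h6 : (J : ℝ) ≤ j := by exact_mod_cast hj
    linarith
  set K : ℝ := (Finset.range (J + 1)).sum (fun k =>
      if poch γ k = 0 then 0 else ‖poch β k‖ / (2 ^ k * ‖poch γ k‖)) + 1 with hK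
  have hsum_nonneg : ∀ k ∈ Finset.range (J + 1),
      (0:ℝ) ≤ if poch γ k = 0 then 0 else ‖poch β k‖ / (2 ^ k * ‖poch γ k‖) := by
    intro k _; split <;> positivity
  have hKpos : 0 < K := by
    have := Finset.sum_nonneg hsum_nonneg
    rw [hK]; linarith
  refine ⟨K, hKpos, ?_⟩
  intro k
  induction k with
  | zero =>
    intro _
    simp only [poch_zero, norm_one, pow_zero, mul_one]
    have := Finset.sum_nonneg hsum_nonneg
    rw [hK]; linarith
  | succ k ih =>
    intro hne
    have hsplit : poch γ k ≠ 0 ∧ (γ + (k:ℂ)) ≠ 0 := by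
      rw [poch_succ] at hne
      exact mul_ne_zero_iff.mp hne
    by_cases hk : k + 1 ≤ J
    · have hmem : k + 1 ∈ Finset.range (J + 1) := by
        simp only [Finset.mem_range]; omega
      have hterm : ‖poch β (k+1)‖ / (2 ^ (k+1) * ‖poch γ (k+1)‖) ≤ K := by
        have h := Finset.single_le_sum hsum_nonneg hmem
        rw [if_neg hne] at h
        rw [hK]; linarith
      have hpos : (0:ℝ) < 2 ^ (k+1) * ‖poch γ (k+1)‖ := by
        have : ‖poch γ (k+1)‖ ≠ 0 := norm_ne_zero_iff.mpr hne
        positivity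
      rw [div_le_iff₀ hpos] at hterm
      calc ‖poch β (k+1)‖ ≤ K * (2 ^ (k+1) * ‖poch γ (k+1)‖) := hterm
        _ = K * 2 ^ (k+1) * ‖poch γ (k+1)‖ := by ring
    · have hJk : J ≤ k := by omega
      calc ‖poch β (k+1)‖ = ‖poch β k‖ * ‖β + (k:ℂ)‖ := by
            rw [poch_succ, norm_mul]
        _ ≤ (K * 2 ^ k * ‖poch γ k‖) * (2 * ‖γ + (k:ℂ)‖) := by
            apply mul_le_mul (ih hsplit.1) (key k hJk) (norm_nonneg _)
            positivity
        _ = K * 2 ^ (k+1) * ‖poch γ (k+1)‖ := by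
            rw [poch_succ, norm_mul]; ring

lemma poch_ofReal (a : ℝ) (k : ℕ) :
    poch (a : ℂ) k = (((ascPochhammer ℝ k).eval a : ℝ) : ℂ) := by
  induction k with
  | zero => simp [poch_zero]
  | succ k ih => rw [poch_succ, ih, ascPochhammer_succ_eval]; push_cast; ring

lemma Complex.Gamma_shift (s : ℂ) (hs : 0 < s.re) (k : ℕ) :
    Complex.Gamma (s + k) = poch s k * Complex.Gamma s := by
  induction k with
  | zero => simp [poch_zero]
  | succ k ih =>
    have hne : s + (k : ℂ) ≠ 0 := by
      intro h
      have := congrArg Complex.re h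
      simp only [Complex.add_re, Complex.natCast_re, Complex.zero_re] at this
      have : (0:ℝ) ≤ (k:ℝ) := Nat.cast_nonneg k
      linarith
    have : s + ((k+1 : ℕ) : ℂ) = (s + k) + 1 := by push_cast; ring
    rw [this, Complex.Gamma_add_one _ hne, ih, poch_succ]; ring

lemma Real.Gamma_shift (t : ℝ) (ht : 0 < t) (k : ℕ) :
    Real.Gamma (t + k) = (ascPochhammer ℝ k).eval t * Real.Gamma t := by
  induction k with
  | zero => simp
  | succ k ih =>
    have hne : t + (k : ℝ) ≠ 0 := by positivity
    have h2 : t + ((k+1 : ℕ) : ℝ) = (t + k) + 1 := by push_cast; ring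
    rw [h2, Real.Gamma_add_one hne, ih, ascPochhammer_succ_eval]; ring

lemma pochR_nonneg (a : ℝ) (ha : 0 < a) (k : ℕ) : 0 ≤ (ascPochhammer ℝ k).eval a := by
  induction k with
  | zero => simp
  | succ k ih =>
    rw [ascPochhammer_succ_eval]
    have : (0:ℝ) ≤ a + k := by positivity
    positivity

/-- the complex Euler integral with an extra monomial. -/
lemma intGammaC (s : ℂ) (hs : 0 < s.re) (k : ℕ) :
    ∫ u in Set.Ioi (0:ℝ), ((Real.exp (-u) : ℂ) * (u:ℂ) ^ (s-1) * (u:ℂ) ^ k)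
      = Complex.Gamma (s + k) := by
  have hsk : 0 < (s + k).re := by
    simp only [Complex.add_re, Complex.natCast_re]
    have : (0:ℝ) ≤ (k:ℝ) := Nat.cast_nonneg k
    linarith
  rw [Complex.Gamma_eq_integral hsk]
  unfold Complex.GammaIntegral
  refine (setIntegral_congr_fun measurableSet_Ioi ?_)
  intro u hu
  have hu' : (0:ℝ) < u := hu
  have hne : (u:ℂ) ≠ 0 := by exact_mod_cast ne_of_gt hu'
  have h9 : (u:ℂ) ^ (s - 1) * (u:ℂ) ^ k = (u:ℂ) ^ (s + k - 1) := by
    rw [show s + (k:ℂ) - 1 = (s - 1) + k by ring, ← Complex.cpow_natCast (u:ℂ) k,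
      ← Complex.cpow_add _ _ hne]
  dsimp only
  rw [mul_assoc, h9]

lemma intGammaC_integrable (s : ℂ) (hs : 0 < s.re) (k : ℕ) :
    IntegrableOn (fun u : ℝ => (Real.exp (-u) : ℂ) * (u:ℂ) ^ (s-1) * (u:ℂ) ^ k)
      (Set.Ioi (0:ℝ)) := by
  have hsk : 0 < (s + k).re := by
    simp only [Complex.add_re, Complex.natCast_re]
    have : (0:ℝ) ≤ (k:ℝ) := Nat.cast_nonneg k
    linarith
  refine (Complex.GammaIntegral_convergent hsk).congr_fun ?_ measurableSet_Ioi
  intro u hu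
  have hu' : (0:ℝ) < u := hu
  have hne : (u:ℂ) ≠ 0 := by exact_mod_cast ne_of_gt hu'
  have h9 : (u:ℂ) ^ (s - 1) * (u:ℂ) ^ k = (u:ℂ) ^ (s + k - 1) := by
    rw [show s + (k:ℂ) - 1 = (s - 1) + k by ring, ← Complex.cpow_natCast (u:ℂ) k,
      ← Complex.cpow_add _ _ hne]
  dsimp only
  rw [mul_assoc, h9]

/-- the real Euler integral with an extra monomial. -/
lemma intGammaR (t : ℝ) (ht : 0 < t) (k : ℕ) :
    ∫ u in Set.Ioi (0:ℝ), (Real.exp (-u) * u ^ (t-1) * u ^ k)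
      = Real.Gamma (t + k) := by
  have htk : 0 < t + k := by positivity
  rw [Real.Gamma_eq_integral htk]
  refine (setIntegral_congr_fun measurableSet_Ioi ?_).symm
  intro u hu
  have hu' : (0:ℝ) < u := hu
  dsimp only
  rw [show t + (k:ℝ) - 1 = (t - 1) + k by ring, Real.rpow_add hu', Real.rpow_natCast,
    mul_assoc]

lemma normA (s : ℂ) (k : ℕ) {u : ℝ} (hu : 0 < u) :
    ‖(Real.exp (-u) : ℂ) * (u:ℂ) ^ (s-1) * (u:ℂ) ^ k‖
      = Real.exp (-u) * u ^ (s.re - 1) * u ^ k := by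
  rw [norm_mul, norm_mul]
  congr 1
  · congr 1
    · rw [Complex.norm_real, Real.norm_eq_abs, abs_of_pos (Real.exp_pos _)]
    · rw [Complex.norm_cpow_eq_rpow_re_of_pos hu]
      simp
  · rw [norm_pow]
    simp [abs_of_pos hu]

/-- Srivastava's triple hypergeometric function `H_A`. -/
noncomputable def srivastavaHA (α β₁ β₂ γ₁ γ₂ : ℂ) (x y z : ℝ) : ℂ :=
  ∑' m : ℕ, ∑' n : ℕ, ∑' p : ℕ,
    poch α (m + p) * poch β₁ (m + n) * poch β₂ (n + p) *
      (x : ℂ) ^ m * (y : ℂ) ^ n * (z : ℂ) ^ p /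
      (poch γ₁ m * poch γ₂ (n + p) *
        (Nat.factorial m : ℂ) * (Nat.factorial n : ℂ) * (Nat.factorial p : ℂ))

/-- The confluent hypergeometric limit function `₀F₁(c; t)`. -/
noncomputable def hyp0F1 (c : ℂ) (t : ℝ) : ℂ :=
  ∑' k : ℕ, (t : ℂ) ^ k / (poch c k * (Nat.factorial k : ℂ))

/-- Kummer's confluent hypergeometric function `₁F₁(a;c;t)`. -/
noncomputable def hyp1F1 (a c : ℂ) (t : ℝ) : ℂ :=
  ∑' k : ℕ, poch a k * (t : ℂ) ^ k / (poch c k * (Nat.factorial k : ℂ))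

lemma tsum_prod_antidiagonal {F : ℕ × ℕ → ℂ} (h : Summable F) :
    ∑' x : ℕ × ℕ, F x = ∑' j : ℕ, ∑ kl ∈ Finset.HasAntidiagonal.antidiagonal j, F kl := by
  conv_rhs => congr; ext; rw [← Finset.sum_finset_coe, ← tsum_fintype (L := .unconditional _)]
  rw [← Finset.HasAntidiagonal.sigmaAntidiagonalEquivProd.tsum_eq F]
  exact Summable.tsum_sigma (Finset.HasAntidiagonal.sigmaAntidiagonalEquivProd.summable_iff.mpr h)

lemma kummer_term_expand (β₂ γ₂ : ℂ) (t₁ t₂ : ℝ) (j : ℕ) :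
    poch β₂ j * ((t₁ + t₂ : ℝ) : ℂ) ^ j / (poch γ₂ j * (j.factorial : ℂ))
      = ∑ kl ∈ Finset.HasAntidiagonal.antidiagonal j,
          poch β₂ (kl.1 + kl.2) * (t₁:ℂ) ^ kl.1 * (t₂:ℂ) ^ kl.2 /
            (poch γ₂ (kl.1 + kl.2) * (kl.1.factorial : ℂ) * (kl.2.factorial : ℂ)) := by
  rw [Finset.Nat.sum_antidiagonal_eq_sum_range_succ_mk]
  have hcast : ((t₁ + t₂ : ℝ) : ℂ) = (t₁ : ℂ) + (t₂ : ℂ) := by push_cast; ring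
  rw [hcast, add_pow, Finset.mul_sum, Finset.sum_div]
  refine Finset.sum_congr rfl ?_
  intro k hk
  have hkj : k ≤ j := Nat.lt_succ_iff.mp (Finset.mem_range.mp hk)
  have hidx : k + (j - k) = j := by omega
  rw [hidx]
  by_cases hd : poch γ₂ j = 0
  · simp [hd]
  · have hfact : (j.factorial : ℂ) = (j.choose k : ℂ) * (k.factorial : ℂ) *
        ((j-k).factorial : ℂ) := by
      exact_mod_cast (Nat.choose_mul_factorial_mul_factorial hkj).symm
    have hC : (j.choose k : ℂ) ≠ 0 := by
      exact_mod_cast Nat.cast_ne_zero.mpr (Nat.choose_pos hkj).ne'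
    have hk1 : (k.factorial : ℂ) ≠ 0 := Nat.cast_ne_zero.mpr k.factorial_ne_zero
    have hk2 : ((j-k).factorial : ℂ) ≠ 0 := Nat.cast_ne_zero.mpr (j-k).factorial_ne_zero
    rw [hfact]
    field_simp

lemma norm_natCast_factorial (n : ℕ) : ‖((n.factorial : ℕ) : ℂ)‖ = (n.factorial : ℝ) := by
  rw [Complex.norm_natCast]

lemma summable_kummer_norm (β₂ γ₂ : ℂ) (t₁ t₂ : ℝ) :
    Summable (fun kl : ℕ × ℕ =>
      ‖poch β₂ (kl.1 + kl.2) * (t₁:ℂ) ^ kl.1 * (t₂:ℂ) ^ kl.2 /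
        (poch γ₂ (kl.1 + kl.2) * (kl.1.factorial : ℂ) * (kl.2.factorial : ℂ))‖) := by
  obtain ⟨K, hKpos, hK⟩ := poch_ratio β₂ γ₂
  have hmaj : Summable (fun kl : ℕ × ℕ =>
      K * ((2*|t₁|) ^ kl.1 / kl.1.factorial * ((2*|t₂|) ^ kl.2 / kl.2.factorial))) := by
    refine Summable.mul_left K ?_
    exact (Real.summable_pow_div_factorial (2*|t₁|)).mul_of_nonneg
      (Real.summable_pow_div_factorial (2*|t₂|))
      (fun n => by positivity) (fun n => by positivity)
  refine hmaj.of_nonneg_of_le (fun _ => norm_nonneg _) ?_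
  rintro ⟨n, p⟩
  by_cases hd : poch γ₂ (n + p) = 0
  · simp only [hd, zero_mul, div_zero, norm_zero]
    positivity
  · have hnum : ‖poch β₂ (n+p) * (t₁:ℂ) ^ n * (t₂:ℂ) ^ p‖
        ≤ K * 2 ^ (n+p) * ‖poch γ₂ (n+p)‖ * |t₁| ^ n * |t₂| ^ p := by
      rw [norm_mul, norm_mul, norm_pow, norm_pow, Complex.norm_real, Complex.norm_real,
        Real.norm_eq_abs, Real.norm_eq_abs]
      have := hK (n+p) hd
      gcongr
    have hden : ‖poch γ₂ (n+p) * ((n.factorial : ℕ) : ℂ) * ((p.factorial : ℕ) : ℂ)‖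
        = ‖poch γ₂ (n+p)‖ * n.factorial * p.factorial := by
      rw [norm_mul, norm_mul, Complex.norm_natCast, Complex.norm_natCast]
    rw [norm_div, hden]
    have hdpos : (0:ℝ) < ‖poch γ₂ (n+p)‖ * n.factorial * p.factorial := by
      have : ‖poch γ₂ (n+p)‖ ≠ 0 := norm_ne_zero_iff.mpr hd
      have h1 : (0:ℝ) < ‖poch γ₂ (n+p)‖ := lt_of_le_of_ne (norm_nonneg _) (Ne.symm this)
      have h2 : (0:ℝ) < n.factorial := by exact_mod_cast n.factorial_pos
      have h3 : (0:ℝ) < p.factorial := by exact_mod_cast p.factorial_pos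
      positivity
    rw [div_le_iff₀ hdpos]
    calc ‖poch β₂ (n+p) * (t₁:ℂ) ^ n * (t₂:ℂ) ^ p‖
        ≤ K * 2 ^ (n+p) * ‖poch γ₂ (n+p)‖ * |t₁| ^ n * |t₂| ^ p := hnum
      _ = K * ((2*|t₁|) ^ n / n.factorial * ((2*|t₂|) ^ p / p.factorial)) *
          (‖poch γ₂ (n+p)‖ * n.factorial * p.factorial) := by
          have h2 : (n.factorial : ℝ) ≠ 0 := by exact_mod_cast n.factorial_ne_zero
          have h3 : (p.factorial : ℝ) ≠ 0 := by exact_mod_cast p.factorial_ne_zero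
          rw [pow_add, mul_pow, mul_pow]
          field_simp

lemma summable_hyp0F1_norm (γ₁ : ℂ) (t : ℝ) :
    Summable (fun m : ℕ => ‖(t:ℂ) ^ m / (poch γ₁ m * (m.factorial : ℂ))‖) := by
  obtain ⟨K, hKpos, hK⟩ := poch_ratio 1 γ₁
  have hmaj : Summable (fun m : ℕ => K * ((2*|t|) ^ m / m.factorial)) :=
    (Real.summable_pow_div_factorial (2*|t|)).mul_left K
  refine hmaj.of_nonneg_of_le (fun _ => norm_nonneg _) ?_
  intro m
  by_cases hd : poch γ₁ m = 0
  · simp only [hd, zero_mul, div_zero, norm_zero]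
    positivity
  · have hG : (0:ℝ) < ‖poch γ₁ m‖ := norm_pos_iff.mpr hd
    have hfpos : (0:ℝ) < (m.factorial : ℝ) := by exact_mod_cast m.factorial_pos
    have hfact : (m.factorial : ℝ) ≤ K * 2 ^ m * ‖poch γ₁ m‖ := by
      have := hK m hd
      rwa [poch_one, Complex.norm_natCast] at this
    rw [norm_div, norm_mul, norm_pow, Complex.norm_real, Real.norm_eq_abs,
      Complex.norm_natCast]
    rw [div_le_iff₀ (by positivity)]
    have e1 : K * ((2*|t|) ^ m / m.factorial) * (‖poch γ₁ m‖ * m.factorial)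
        = (K * 2 ^ m * ‖poch γ₁ m‖) * |t| ^ m := by
      rw [mul_pow]
      field_simp
    rw [e1]
    have h1 : (1:ℝ) ≤ K * 2 ^ m * ‖poch γ₁ m‖ := by
      have : (1:ℝ) ≤ (m.factorial : ℝ) := by exact_mod_cast m.factorial_pos
      linarith
    nlinarith [pow_nonneg (abs_nonneg t) m]

lemma hyp1F1_expand (β₂ γ₂ : ℂ) (t₁ t₂ : ℝ) :
    hyp1F1 β₂ γ₂ (t₁ + t₂) = ∑' kl : ℕ × ℕ,
      poch β₂ (kl.1 + kl.2) * (t₁:ℂ) ^ kl.1 * (t₂:ℂ) ^ kl.2 /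
        (poch γ₂ (kl.1 + kl.2) * (kl.1.factorial : ℂ) * (kl.2.factorial : ℂ)) := by
  rw [hyp1F1, tsum_prod_antidiagonal (summable_kummer_norm β₂ γ₂ t₁ t₂).of_norm]
  exact tsum_congr (fun j => kummer_term_expand β₂ γ₂ t₁ t₂ j)

lemma product_expand (γ₁ β₂ γ₂ : ℂ) (s t₁ t₂ : ℝ) :
    hyp0F1 γ₁ s * hyp1F1 β₂ γ₂ (t₁ + t₂) =
      ∑' q : ℕ × ℕ × ℕ,
        ((s:ℂ) ^ q.1 / (poch γ₁ q.1 * (q.1.factorial : ℂ))) *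
          (poch β₂ (q.2.1 + q.2.2) * (t₁:ℂ) ^ q.2.1 * (t₂:ℂ) ^ q.2.2 /
            (poch γ₂ (q.2.1 + q.2.2) * (q.2.1.factorial : ℂ) * (q.2.2.factorial : ℂ))) := by
  rw [hyp1F1_expand, hyp0F1]
  exact tsum_mul_tsum_of_summable_norm (summable_hyp0F1_norm γ₁ s)
    (summable_kummer_norm β₂ γ₂ t₁ t₂)

lemma factorial_add_le (m p : ℕ) :
    (((m+p).factorial : ℕ) : ℝ) ≤ 2 ^ (m+p) * (m.factorial : ℝ) * (p.factorial : ℝ) := by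
  have h1 : (m+p).choose p * m.factorial * p.factorial = (m+p).factorial :=
    Nat.add_choose_mul_factorial_mul_factorial m p
  have h2 : (m+p).choose p ≤ 2 ^ (m+p) := by
    calc (m+p).choose p ≤ ∑ i ∈ Finset.range (m+p+1), (m+p).choose i :=
          Finset.single_le_sum (fun i _ => Nat.zero_le _)
            (Finset.mem_range.mpr (by omega))
      _ = 2 ^ (m+p) := Nat.sum_range_choose (m+p)
  have h3 : (m+p).factorial ≤ 2 ^ (m+p) * m.factorial * p.factorial := by
    calc (m+p).factorial = (m+p).choose p * m.factorial * p.factorial := h1.symm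
      _ ≤ 2 ^ (m+p) * m.factorial * p.factorial := by
        exact Nat.mul_le_mul_right _ (Nat.mul_le_mul_right _ h2)
  exact_mod_cast h3

noncomputable def cQ (β₂ γ₁ γ₂ : ℂ) (x y z : ℝ) (q : ℕ × ℕ × ℕ) : ℂ :=
  poch β₂ (q.2.1 + q.2.2) * (x:ℂ) ^ q.1 * (y:ℂ) ^ q.2.1 * (z:ℂ) ^ q.2.2 /
    (poch γ₁ q.1 * poch γ₂ (q.2.1 + q.2.2) * (q.1.factorial : ℂ) *
      (q.2.1.factorial : ℂ) * (q.2.2.factorial : ℂ))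

lemma norm_cQ_eq (β₂ γ₁ γ₂ : ℂ) (x y z : ℝ) (m n p : ℕ)
    (h1 : poch γ₁ m ≠ 0) (h2 : poch γ₂ (n+p) ≠ 0) :
    ‖cQ β₂ γ₁ γ₂ x y z (m,n,p)‖ =
      (‖poch β₂ (n+p)‖ / ‖poch γ₂ (n+p)‖) * ((m.factorial : ℝ) / ‖poch γ₁ m‖) *
        (|x| ^ m * |y| ^ n * |z| ^ p /
          ((m.factorial : ℝ) * m.factorial * n.factorial * p.factorial)) := by
  have hg1 : ‖poch γ₁ m‖ ≠ 0 := norm_ne_zero_iff.mpr h1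
  have hg2 : ‖poch γ₂ (n+p)‖ ≠ 0 := norm_ne_zero_iff.mpr h2
  have hm : (m.factorial : ℝ) ≠ 0 := by exact_mod_cast m.factorial_ne_zero
  have hn : (n.factorial : ℝ) ≠ 0 := by exact_mod_cast n.factorial_ne_zero
  have hp : (p.factorial : ℝ) ≠ 0 := by exact_mod_cast p.factorial_ne_zero
  rw [cQ, norm_div]
  rw [norm_mul, norm_mul, norm_mul, norm_mul, norm_mul, norm_mul, norm_mul]
  rw [norm_pow, norm_pow, norm_pow, Complex.norm_real, Complex.norm_real, Complex.norm_real,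
    Real.norm_eq_abs, Real.norm_eq_abs, Real.norm_eq_abs,
    Complex.norm_natCast, Complex.norm_natCast, Complex.norm_natCast]
  have hD : ‖poch γ₁ m‖ * ‖poch γ₂ (n+p)‖ * (m.factorial : ℝ) *
      (n.factorial : ℝ) * (p.factorial : ℝ) ≠ 0 :=
    mul_ne_zero (mul_ne_zero (mul_ne_zero (mul_ne_zero hg1 hg2) hm) hn) hp
  rw [div_mul_div_comm, div_mul_div_comm, div_eq_div_iff hD
    (mul_ne_zero (mul_ne_zero hg2 hg1)
      (mul_ne_zero (mul_ne_zero (mul_ne_zero hm hm) hn) hp))]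
  ring

lemma pow32 (u : ℝ) (m : ℕ) : (32*u)^m = 2^m*2^m*2^m*2^m*2^m*u^m := by
  rw [show (32:ℝ)*u = 2*2*2*2*2*u by norm_num, mul_pow, mul_pow, mul_pow, mul_pow, mul_pow]

lemma pow8 (u : ℝ) (m : ℕ) : (8*u)^m = 2^m*2^m*2^m*u^m := by
  rw [show (8:ℝ)*u = 2*2*2*u by norm_num, mul_pow, mul_pow, mul_pow]

lemma pow2' (u : ℝ) (m : ℕ) : (2*u)^m = 2^m*u^m := by rw [mul_pow]

lemma cQ_zero₁ (β₂ γ₁ γ₂ : ℂ) (x y z : ℝ) (m n p : ℕ) (h1 : poch γ₁ m = 0) :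
    cQ β₂ γ₁ γ₂ x y z (m,n,p) = 0 := by
  simp [cQ, h1]

lemma cQ_zero₂ (β₂ γ₁ γ₂ : ℂ) (x y z : ℝ) (m n p : ℕ) (h2 : poch γ₂ (n+p) = 0) :
    cQ β₂ γ₁ γ₂ x y z (m,n,p) = 0 := by
  simp [cQ, h2]

lemma cQ_bound (β₂ γ₁ γ₂ : ℂ) (x y z : ℝ) :
    ∃ K : ℝ, 0 < K ∧ ∀ m n p : ℕ,
      ‖cQ β₂ γ₁ γ₂ x y z (m,n,p)‖ * (2^(m+p) * (((m+p).factorial : ℕ) : ℝ)) *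
        (2^(m+n) * (((m+n).factorial : ℕ) : ℝ))
      ≤ K * ((32*|x|)^m * ((8*|y|)^n * (8*|z|)^p)) := by
  obtain ⟨K₁, hK₁pos, hK₁⟩ := poch_ratio 1 γ₁
  obtain ⟨K₂, hK₂pos, hK₂⟩ := poch_ratio β₂ γ₂
  refine ⟨K₁*K₂, by positivity, ?_⟩
  intro m n p
  by_cases h1 : poch γ₁ m = 0
  · rw [cQ_zero₁ _ _ _ _ _ _ _ _ _ h1]
    simp only [norm_zero, zero_mul]
    positivity
  by_cases h2 : poch γ₂ (n+p) = 0
  · rw [cQ_zero₂ _ _ _ _ _ _ _ _ _ h2]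
    simp only [norm_zero, zero_mul]
    positivity
  rw [norm_cQ_eq _ _ _ _ _ _ _ _ _ h1 h2]
  have hg1 : (0:ℝ) < ‖poch γ₁ m‖ := norm_pos_iff.mpr h1
  have hg2 : (0:ℝ) < ‖poch γ₂ (n+p)‖ := norm_pos_iff.mpr h2
  have hm : (0:ℝ) < (m.factorial : ℝ) := by exact_mod_cast m.factorial_pos
  have hn : (0:ℝ) < (n.factorial : ℝ) := by exact_mod_cast n.factorial_pos
  have hp : (0:ℝ) < (p.factorial : ℝ) := by exact_mod_cast p.factorial_pos
  have e1 : ‖poch β₂ (n+p)‖ / ‖poch γ₂ (n+p)‖ ≤ K₂ * 2^(n+p) := by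
    rw [div_le_iff₀ hg2]
    calc ‖poch β₂ (n+p)‖ ≤ K₂ * 2^(n+p) * ‖poch γ₂ (n+p)‖ := hK₂ (n+p) h2
      _ = K₂ * 2^(n+p) * ‖poch γ₂ (n+p)‖ := rfl
  have e2 : (m.factorial : ℝ) / ‖poch γ₁ m‖ ≤ K₁ * 2^m := by
    rw [div_le_iff₀ hg1]
    have := hK₁ m h1
    rwa [poch_one, Complex.norm_natCast] at this
  have e3 := factorial_add_le m p
  have e4 := factorial_add_le m n
  calc (‖poch β₂ (n+p)‖ / ‖poch γ₂ (n+p)‖) * ((m.factorial : ℝ) / ‖poch γ₁ m‖) *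
        (|x| ^ m * |y| ^ n * |z| ^ p /
          ((m.factorial : ℝ) * m.factorial * n.factorial * p.factorial)) *
        (2^(m+p) * (((m+p).factorial : ℕ) : ℝ)) * (2^(m+n) * (((m+n).factorial : ℕ) : ℝ))
      ≤ (K₂ * 2^(n+p)) * (K₁ * 2^m) *
        (|x| ^ m * |y| ^ n * |z| ^ p /
          ((m.factorial : ℝ) * m.factorial * n.factorial * p.factorial)) *
        (2^(m+p) * (2^(m+p) * m.factorial * p.factorial)) *
        (2^(m+n) * (2^(m+n) * m.factorial * n.factorial)) := by
        gcongr
    _ = (K₁*K₂) * ((32*|x|)^m * ((8*|y|)^n * (8*|z|)^p)) := by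
        rw [pow32, pow8, pow8]
        simp only [pow_add]
        field_simp

lemma cQ_bound3 (β₂ γ₁ γ₂ : ℂ) (x y z : ℝ) (w : ℝ) (hw : 0 ≤ w) :
    ∃ K : ℝ, 0 < K ∧ ∀ m n p : ℕ,
      ‖cQ β₂ γ₁ γ₂ x y z (m,n,p)‖ * (2^(m+n) * (((m+n).factorial : ℕ) : ℝ)) * w^(m+p)
      ≤ K * ((8*(|x| * w))^m / m.factorial *
          ((8*|y|)^n * ((2*(|z| * w))^p / p.factorial))) := by
  obtain ⟨K₁, hK₁pos, hK₁⟩ := poch_ratio 1 γ₁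
  obtain ⟨K₂, hK₂pos, hK₂⟩ := poch_ratio β₂ γ₂
  refine ⟨K₁*K₂, by positivity, ?_⟩
  intro m n p
  by_cases h1 : poch γ₁ m = 0
  · rw [cQ_zero₁ _ _ _ _ _ _ _ _ _ h1]
    simp only [norm_zero, zero_mul]
    positivity
  by_cases h2 : poch γ₂ (n+p) = 0
  · rw [cQ_zero₂ _ _ _ _ _ _ _ _ _ h2]
    simp only [norm_zero, zero_mul]
    positivity
  rw [norm_cQ_eq _ _ _ _ _ _ _ _ _ h1 h2]
  have hg1 : (0:ℝ) < ‖poch γ₁ m‖ := norm_pos_iff.mpr h1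
  have hg2 : (0:ℝ) < ‖poch γ₂ (n+p)‖ := norm_pos_iff.mpr h2
  have hm : (0:ℝ) < (m.factorial : ℝ) := by exact_mod_cast m.factorial_pos
  have hn : (0:ℝ) < (n.factorial : ℝ) := by exact_mod_cast n.factorial_pos
  have hp : (0:ℝ) < (p.factorial : ℝ) := by exact_mod_cast p.factorial_pos
  have e1 : ‖poch β₂ (n+p)‖ / ‖poch γ₂ (n+p)‖ ≤ K₂ * 2^(n+p) := by
    rw [div_le_iff₀ hg2]
    exact hK₂ (n+p) h2
  have e2 : (m.factorial : ℝ) / ‖poch γ₁ m‖ ≤ K₁ * 2^m := by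
    rw [div_le_iff₀ hg1]
    have := hK₁ m h1
    rwa [poch_one, Complex.norm_natCast] at this
  have e4 := factorial_add_le m n
  calc (‖poch β₂ (n+p)‖ / ‖poch γ₂ (n+p)‖) * ((m.factorial : ℝ) / ‖poch γ₁ m‖) *
        (|x| ^ m * |y| ^ n * |z| ^ p /
          ((m.factorial : ℝ) * m.factorial * n.factorial * p.factorial)) *
        (2^(m+n) * (((m+n).factorial : ℕ) : ℝ)) * w^(m+p)
      ≤ (K₂ * 2^(n+p)) * (K₁ * 2^m) *
        (|x| ^ m * |y| ^ n * |z| ^ p /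
          ((m.factorial : ℝ) * m.factorial * n.factorial * p.factorial)) *
        (2^(m+n) * (2^(m+n) * m.factorial * n.factorial)) * w^(m+p) := by
        gcongr
    _ = (K₁*K₂) * ((8*(|x| * w))^m / m.factorial *
          ((8*|y|)^n * ((2*(|z| * w))^p / p.factorial))) := by
        rw [pow8 (|x| * w), pow8 (|y|), pow2' (|z| * w)]
        simp only [pow_add, mul_pow]
        field_simp

lemma pochR_nonneg' (a : ℝ) (ha : 0 ≤ a) (k : ℕ) : 0 ≤ (ascPochhammer ℝ k).eval a := by
  induction k with
  | zero => simp
  | succ k ih =>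
    rw [ascPochhammer_succ_eval]
    have : (0:ℝ) ≤ a + k := by positivity
    positivity

lemma pochR_le_norm (s : ℂ) (hs : 0 ≤ s.re) (k : ℕ) :
    (ascPochhammer ℝ k).eval s.re ≤ ‖poch s k‖ := by
  induction k with
  | zero => simp [poch_zero]
  | succ k ih =>
    rw [ascPochhammer_succ_eval, poch_succ, norm_mul]
    have h1 : s.re + k ≤ ‖s + (k:ℂ)‖ := by
      have : (s + (k:ℂ)).re = s.re + k := by
        simp [Complex.add_re]
      rw [← this]
      exact Complex.re_le_norm _
    have h2 : (0:ℝ) ≤ s.re + k := by positivity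
    have h3 : (0:ℝ) ≤ (ascPochhammer ℝ k).eval s.re := pochR_nonneg' s.re hs k
    exact mul_le_mul ih h1 h2 (norm_nonneg _)

lemma pochR_le (s : ℝ) : ∃ K : ℝ, 0 < K ∧ ∀ k : ℕ,
    (ascPochhammer ℝ k).eval s ≤ K * 2^k * (k.factorial : ℝ) := by
  obtain ⟨K, hKpos, hK⟩ := poch_ratio (s : ℂ) 1
  refine ⟨K, hKpos, fun k => ?_⟩
  have h1 : (ascPochhammer ℝ k).eval s ≤ ‖poch (s:ℂ) k‖ := by
    rw [poch_ofReal, Complex.norm_real, Real.norm_eq_abs]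
    exact le_abs_self _
  have h2 := hK k (poch_one_ne k)
  rw [poch_one, Complex.norm_natCast] at h2
  linarith

lemma poch_norm_le (s : ℂ) : ∃ K : ℝ, 0 < K ∧ ∀ k : ℕ,
    ‖poch s k‖ ≤ K * 2^k * (k.factorial : ℝ) := by
  obtain ⟨K, hKpos, hK⟩ := poch_ratio s 1
  refine ⟨K, hKpos, fun k => ?_⟩
  have h2 := hK k (poch_one_ne k)
  rwa [poch_one, Complex.norm_natCast] at h2

lemma summable_g3 {a b c : ℝ} (ha0 : 0 ≤ a) (ha : a < 1) (hb0 : 0 ≤ b) (hb : b < 1)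
    (hc0 : 0 ≤ c) (hc : c < 1) :
    Summable (fun q : ℕ × ℕ × ℕ => a ^ q.1 * (b ^ q.2.1 * c ^ q.2.2)) := by
  have h1 : Summable (fun kl : ℕ × ℕ => b ^ kl.1 * c ^ kl.2) :=
    (summable_geometric_of_lt_one hb0 hb).mul_of_nonneg
      (summable_geometric_of_lt_one hc0 hc)
      (fun _ => by positivity) (fun _ => by positivity)
  exact (summable_geometric_of_lt_one ha0 ha).mul_of_nonneg h1
    (fun _ => by positivity) (fun _ => by positivity)

lemma summable_gexp3 {a b c : ℝ} (ha0 : 0 ≤ a) (hb0 : 0 ≤ b) (hb : b < 1) (hc0 : 0 ≤ c) :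
    Summable (fun q : ℕ × ℕ × ℕ =>
      a ^ q.1 / (q.1.factorial : ℝ) * (b ^ q.2.1 * (c ^ q.2.2 / (q.2.2.factorial : ℝ)))) := by
  have h1 : Summable (fun kl : ℕ × ℕ => b ^ kl.1 * (c ^ kl.2 / (kl.2.factorial : ℝ))) :=
    (summable_geometric_of_lt_one hb0 hb).mul_of_nonneg
      (Real.summable_pow_div_factorial c)
      (fun _ => by positivity) (fun _ => by positivity)
  exact (Real.summable_pow_div_factorial a).mul_of_nonneg h1
    (fun _ => by positivity) (fun _ => by positivity)

noncomputable def SQ (α β₁ β₂ γ₁ γ₂ : ℂ) (x y z : ℝ) (q : ℕ × ℕ × ℕ) : ℂ :=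
  poch α (q.1 + q.2.2) * poch β₁ (q.1 + q.2.1) * poch β₂ (q.2.1 + q.2.2) *
    (x:ℂ) ^ q.1 * (y:ℂ) ^ q.2.1 * (z:ℂ) ^ q.2.2 /
    (poch γ₁ q.1 * poch γ₂ (q.2.1 + q.2.2) * (q.1.factorial : ℂ) *
      (q.2.1.factorial : ℂ) * (q.2.2.factorial : ℂ))

lemma SQ_eq (α β₁ β₂ γ₁ γ₂ : ℂ) (x y z : ℝ) (q : ℕ × ℕ × ℕ) :
    SQ α β₁ β₂ γ₁ γ₂ x y z q =
      poch α (q.1 + q.2.2) * poch β₁ (q.1 + q.2.1) * cQ β₂ γ₁ γ₂ x y z q := by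
  rw [SQ, cQ]; ring

lemma summable_SQ (α β₁ β₂ γ₁ γ₂ : ℂ) (x y z : ℝ)
    (hx : |x| < 1/64) (hy : |y| < 1/64) (hz : |z| < 1/64) :
    Summable (fun q : ℕ × ℕ × ℕ => ‖SQ α β₁ β₂ γ₁ γ₂ x y z q‖) := by
  obtain ⟨K, hK, hB⟩ := cQ_bound β₂ γ₁ γ₂ x y z
  obtain ⟨K₃, hK₃, h₃⟩ := poch_norm_le α
  obtain ⟨K₄, hK₄, h₄⟩ := poch_norm_le β₁
  have hmaj : Summable (fun q : ℕ × ℕ × ℕ =>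
      (K₃ * K₄ * K) * ((32*|x|) ^ q.1 * ((8*|y|) ^ q.2.1 * (8*|z|) ^ q.2.2))) := by
    refine Summable.mul_left _ (summable_g3 (by positivity) (by linarith [abs_nonneg x])
      (by positivity) (by linarith [abs_nonneg y]) (by positivity) (by linarith [abs_nonneg z]))
  refine hmaj.of_nonneg_of_le (fun _ => norm_nonneg _) ?_
  rintro ⟨m, n, p⟩
  rw [SQ_eq, norm_mul, norm_mul]
  calc ‖poch α (m+p)‖ * ‖poch β₁ (m+n)‖ * ‖cQ β₂ γ₁ γ₂ x y z (m,n,p)‖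
      ≤ (K₃ * 2^(m+p) * ((m+p).factorial : ℝ)) * (K₄ * 2^(m+n) * ((m+n).factorial : ℝ)) *
        ‖cQ β₂ γ₁ γ₂ x y z (m,n,p)‖ := by
        gcongr <;> [exact h₃ (m+p); exact h₄ (m+n)]
    _ = (K₃ * K₄) * (‖cQ β₂ γ₁ γ₂ x y z (m,n,p)‖ * (2^(m+p) * ((m+p).factorial : ℝ)) *
        (2^(m+n) * ((m+n).factorial : ℝ))) := by ring
    _ ≤ (K₃ * K₄) * (K * ((32*|x|) ^ m * ((8*|y|) ^ n * (8*|z|) ^ p))) := by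
        exact mul_le_mul_of_nonneg_left (hB m n p) (by positivity)
    _ = (K₃ * K₄ * K) * ((32*|x|) ^ m * ((8*|y|) ^ n * (8*|z|) ^ p)) := by ring

lemma summable_V (α β₁ β₂ γ₁ γ₂ : ℂ) (x y z : ℝ) (hα : 0 < α.re) (hβ₁ : 0 < β₁.re)
    (hx : |x| < 1/64) (hy : |y| < 1/64) (hz : |z| < 1/64) :
    Summable (fun q : ℕ × ℕ × ℕ => ‖cQ β₂ γ₁ γ₂ x y z q‖ *
      ‖Complex.Gamma (β₁ + ((q.1 + q.2.1 : ℕ) : ℂ))‖ *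
      Real.Gamma (α.re + ((q.1 + q.2.2 : ℕ) : ℝ))) := by
  obtain ⟨K, hK, hB⟩ := cQ_bound β₂ γ₁ γ₂ x y z
  obtain ⟨K₃, hK₃, h₃⟩ := poch_norm_le α
  obtain ⟨K₄, hK₄, h₄⟩ := poch_norm_le β₁
  have hGa : (0:ℝ) < Real.Gamma α.re := Real.Gamma_pos_of_pos hα
  have hmaj : Summable (fun q : ℕ × ℕ × ℕ =>
      (‖Complex.Gamma β₁‖ * Real.Gamma α.re * (K₃ * K₄ * K)) *
        ((32*|x|) ^ q.1 * ((8*|y|) ^ q.2.1 * (8*|z|) ^ q.2.2))) :=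
    Summable.mul_left _ (summable_g3 (by positivity) (by linarith [abs_nonneg x])
      (by positivity) (by linarith [abs_nonneg y]) (by positivity) (by linarith [abs_nonneg z]))
  refine hmaj.of_nonneg_of_le (fun q => by positivity) ?_
  rintro ⟨m, n, p⟩
  rw [Complex.Gamma_shift β₁ hβ₁ (m+n), Real.Gamma_shift α.re hα (m+p), norm_mul]
  calc ‖cQ β₂ γ₁ γ₂ x y z (m,n,p)‖ * (‖poch β₁ (m+n)‖ * ‖Complex.Gamma β₁‖) *
        ((ascPochhammer ℝ (m+p)).eval α.re * Real.Gamma α.re)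
      ≤ ‖cQ β₂ γ₁ γ₂ x y z (m,n,p)‖ * ((K₄ * 2^(m+n) * ((m+n).factorial : ℝ)) * ‖Complex.Gamma β₁‖) *
        ((K₃ * 2^(m+p) * ((m+p).factorial : ℝ)) * Real.Gamma α.re) := by
        have hnn : 0 ≤ (ascPochhammer ℝ (m+p)).eval α.re := pochR_nonneg' _ hα.le _
        gcongr <;> first
          | exact h₄ (m+n)
          | exact le_trans (pochR_le_norm α hα.le (m+p)) (h₃ (m+p))
          | exact mul_nonneg hnn hGa.le
          | positivity
    _ = (‖Complex.Gamma β₁‖ * Real.Gamma α.re * (K₃ * K₄)) *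
        (‖cQ β₂ γ₁ γ₂ x y z (m,n,p)‖ * (2^(m+p) * ((m+p).factorial : ℝ)) *
          (2^(m+n) * ((m+n).factorial : ℝ))) := by ring
    _ ≤ (‖Complex.Gamma β₁‖ * Real.Gamma α.re * (K₃ * K₄)) *
        (K * ((32*|x|) ^ m * ((8*|y|) ^ n * (8*|z|) ^ p))) := by
        exact mul_le_mul_of_nonneg_left (hB m n p) (by positivity)
    _ = (‖Complex.Gamma β₁‖ * Real.Gamma α.re * (K₃ * K₄ * K)) *
        ((32*|x|) ^ m * ((8*|y|) ^ n * (8*|z|) ^ p)) := by ring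

lemma summable_I (β₂ γ₁ γ₂ : ℂ) (x y z : ℝ) (b : ℝ) (hb : 0 < b)
    (hy : |y| < 1/64) (w C : ℝ) (hw : 0 ≤ w) (hC : 0 ≤ C) :
    Summable (fun q : ℕ × ℕ × ℕ => ‖cQ β₂ γ₁ γ₂ x y z q‖ * (C * w ^ (q.1 + q.2.2)) *
      Real.Gamma (b + ((q.1 + q.2.1 : ℕ) : ℝ))) := by
  obtain ⟨K, hK, hB⟩ := cQ_bound3 β₂ γ₁ γ₂ x y z w hw
  obtain ⟨K₆, hK₆, h₆⟩ := pochR_le b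
  have hGb : (0:ℝ) < Real.Gamma b := Real.Gamma_pos_of_pos hb
  have hmaj : Summable (fun q : ℕ × ℕ × ℕ =>
      (C * Real.Gamma b * K₆ * K) * ((8*(|x| * w)) ^ q.1 / (q.1.factorial : ℝ) *
        ((8*|y|) ^ q.2.1 * ((2*(|z| * w)) ^ q.2.2 / (q.2.2.factorial : ℝ))))) :=
    Summable.mul_left _ (summable_gexp3 (by positivity) (by positivity)
      (by linarith [abs_nonneg y]) (by positivity))
  refine hmaj.of_nonneg_of_le (fun q => by positivity) ?_
  rintro ⟨m, n, p⟩
  rw [Real.Gamma_shift b hb (m+n)]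
  calc ‖cQ β₂ γ₁ γ₂ x y z (m,n,p)‖ * (C * w ^ (m+p)) *
        ((ascPochhammer ℝ (m+n)).eval b * Real.Gamma b)
      ≤ ‖cQ β₂ γ₁ γ₂ x y z (m,n,p)‖ * (C * w ^ (m+p)) *
        ((K₆ * 2^(m+n) * ((m+n).factorial : ℝ)) * Real.Gamma b) := by
        gcongr
        exact h₆ (m+n)
    _ = (C * Real.Gamma b * K₆) * (‖cQ β₂ γ₁ γ₂ x y z (m,n,p)‖ *
        (2^(m+n) * ((m+n).factorial : ℝ)) * w ^ (m+p)) := by ring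
    _ ≤ (C * Real.Gamma b * K₆) * (K * ((8*(|x| * w)) ^ m / (m.factorial : ℝ) *
        ((8*|y|) ^ n * ((2*(|z| * w)) ^ p / (p.factorial : ℝ))))) := by
        exact mul_le_mul_of_nonneg_left (hB m n p) (by positivity)
    _ = (C * Real.Gamma b * K₆ * K) * ((8*(|x| * w)) ^ m / (m.factorial : ℝ) *
        ((8*|y|) ^ n * ((2*(|z| * w)) ^ p / (p.factorial : ℝ)))) := by ring

noncomputable def AF (s : ℂ) (k : ℕ) (u : ℝ) : ℂ :=
  (Real.exp (-u) : ℂ) * (u:ℂ) ^ (s-1) * (u:ℂ) ^ k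

lemma intGammaC_AF (s : ℂ) (hs : 0 < s.re) (k : ℕ) :
    ∫ u in Set.Ioi (0:ℝ), AF s k u = Complex.Gamma (s + k) := intGammaC s hs k

lemma intGammaC_AF_integrable (s : ℂ) (hs : 0 < s.re) (k : ℕ) :
    IntegrableOn (fun u : ℝ => AF s k u) (Set.Ioi (0:ℝ)) := intGammaC_integrable s hs k

lemma normAF_integral (s : ℂ) (hs : 0 < s.re) (k : ℕ) :
    ∫ u in Set.Ioi (0:ℝ), ‖AF s k u‖ = Real.Gamma (s.re + k) := by
  refine (setIntegral_congr_fun (f := fun u => ‖AF s k u‖)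
    (g := fun u => Real.exp (-u) * u ^ (s.re - 1) * u ^ k)
    measurableSet_Ioi (fun u hu => normA s k hu)).trans (intGammaR s.re hs k)

lemma norm_AF_split (s : ℂ) (k : ℕ) (u : ℝ) :
    ‖AF s k u‖ = ‖(Real.exp (-u) : ℂ) * (u:ℂ) ^ (s-1)‖ * |u| ^ k := by
  rw [show AF s k u = ((Real.exp (-u) : ℂ) * (u:ℂ) ^ (s-1)) * (u:ℂ) ^ k from rfl,
    norm_mul, norm_pow, Complex.norm_real, Real.norm_eq_abs]

lemma integrand_expand (α β₁ β₂ γ₁ γ₂ : ℂ) (x y z u₁ u₂ : ℝ) :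
    (Real.exp (-u₁ - u₂) : ℂ) * (u₁ : ℂ) ^ (α - 1) * (u₂ : ℂ) ^ (β₁ - 1) *
        hyp0F1 γ₁ (x * u₁ * u₂) * hyp1F1 β₂ γ₂ (y * u₂ + z * u₁) =
      ∑' q : ℕ × ℕ × ℕ, cQ β₂ γ₁ γ₂ x y z q * AF α (q.1 + q.2.2) u₁ *
        AF β₁ (q.1 + q.2.1) u₂ := by
  have h1 := product_expand γ₁ β₂ γ₂ (x * u₁ * u₂) (y * u₂) (z * u₁)
  calc (Real.exp (-u₁ - u₂) : ℂ) * (u₁ : ℂ) ^ (α - 1) * (u₂ : ℂ) ^ (β₁ - 1) *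
        hyp0F1 γ₁ (x * u₁ * u₂) * hyp1F1 β₂ γ₂ (y * u₂ + z * u₁)
      = ((Real.exp (-u₁ - u₂) : ℂ) * (u₁ : ℂ) ^ (α - 1) * (u₂ : ℂ) ^ (β₁ - 1)) *
        (hyp0F1 γ₁ (x * u₁ * u₂) * hyp1F1 β₂ γ₂ (y * u₂ + z * u₁)) := by ring
    _ = ((Real.exp (-u₁ - u₂) : ℂ) * (u₁ : ℂ) ^ (α - 1) * (u₂ : ℂ) ^ (β₁ - 1)) *
        ∑' q : ℕ × ℕ × ℕ,
          (((x * u₁ * u₂ : ℝ) : ℂ) ^ q.1 / (poch γ₁ q.1 * (q.1.factorial : ℂ))) *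
          (poch β₂ (q.2.1 + q.2.2) * ((y * u₂ : ℝ) : ℂ) ^ q.2.1 * ((z * u₁ : ℝ) : ℂ) ^ q.2.2 /
            (poch γ₂ (q.2.1 + q.2.2) * (q.2.1.factorial : ℂ) * (q.2.2.factorial : ℂ))) := by
        rw [h1]
    _ = ∑' q : ℕ × ℕ × ℕ, ((Real.exp (-u₁ - u₂) : ℂ) * (u₁ : ℂ) ^ (α - 1) * (u₂ : ℂ) ^ (β₁ - 1)) *
        ((((x * u₁ * u₂ : ℝ) : ℂ) ^ q.1 / (poch γ₁ q.1 * (q.1.factorial : ℂ))) *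
          (poch β₂ (q.2.1 + q.2.2) * ((y * u₂ : ℝ) : ℂ) ^ q.2.1 * ((z * u₁ : ℝ) : ℂ) ^ q.2.2 /
            (poch γ₂ (q.2.1 + q.2.2) * (q.2.1.factorial : ℂ) * (q.2.2.factorial : ℂ)))) := by
        rw [tsum_mul_left]
    _ = ∑' q : ℕ × ℕ × ℕ, cQ β₂ γ₁ γ₂ x y z q * AF α (q.1 + q.2.2) u₁ *
        AF β₁ (q.1 + q.2.1) u₂ := by
        refine tsum_congr fun q => ?_
        rw [cQ, AF, AF]
        rw [show (Real.exp (-u₁ - u₂) : ℂ) = (Real.exp (-u₁) : ℂ) * (Real.exp (-u₂) : ℂ) by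
          rw [← Complex.ofReal_mul, ← Real.exp_add]; ring_nf]
        push_cast
        rw [pow_add, pow_add]
        ring

/-- Integral representation (6.5) for `H_A`, valid for `x, y, z` sufficiently small. -/
theorem srivastavaHA_integral (α β₁ β₂ γ₁ γ₂ : ℂ)
    (hα : 0 < α.re) (hβ₁ : 0 < β₁.re) :
    ∃ ε > (0:ℝ), ∀ x y z : ℝ, |x| < ε → |y| < ε → |z| < ε →
      srivastavaHA α β₁ β₂ γ₁ γ₂ x y z =
        (1 / (Complex.Gamma α * Complex.Gamma β₁)) *
          ∫ u₁ in Set.Ioi (0:ℝ), ∫ u₂ in Set.Ioi (0:ℝ),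
            (Real.exp (-u₁ - u₂) : ℂ) * (u₁ : ℂ) ^ (α - 1) * (u₂ : ℂ) ^ (β₁ - 1) *
              hyp0F1 γ₁ (x * u₁ * u₂) * hyp1F1 β₂ γ₂ (y * u₂ + z * u₁) := by
  refine ⟨1/64, by norm_num, fun x y z hx hy hz => ?_⟩
  have hGα : Complex.Gamma α ≠ 0 := Complex.Gamma_ne_zero_of_re_pos hα
  have hGβ : Complex.Gamma β₁ ≠ 0 := Complex.Gamma_ne_zero_of_re_pos hβ₁
  have step1 : ∀ u₁ : ℝ,
      (∫ u₂ in Set.Ioi (0:ℝ),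
        (Real.exp (-u₁ - u₂) : ℂ) * (u₁ : ℂ) ^ (α - 1) * (u₂ : ℂ) ^ (β₁ - 1) *
          hyp0F1 γ₁ (x * u₁ * u₂) * hyp1F1 β₂ γ₂ (y * u₂ + z * u₁))
      = ∑' q : ℕ × ℕ × ℕ, cQ β₂ γ₁ γ₂ x y z q *
          Complex.Gamma (β₁ + ((q.1 + q.2.1 : ℕ) : ℂ)) * AF α (q.1 + q.2.2) u₁ := by
    intro u₁
    have hInt : ∀ q : ℕ × ℕ × ℕ, Integrable
        (fun u₂ => cQ β₂ γ₁ γ₂ x y z q * AF α (q.1+q.2.2) u₁ * AF β₁ (q.1+q.2.1) u₂)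
        (volume.restrict (Set.Ioi (0:ℝ))) := fun q =>
      (intGammaC_AF_integrable β₁ hβ₁ (q.1+q.2.1)).const_mul _
    have hnormint : ∀ q : ℕ × ℕ × ℕ,
        (∫ u₂ in Set.Ioi (0:ℝ), ‖cQ β₂ γ₁ γ₂ x y z q * AF α (q.1+q.2.2) u₁ *
          AF β₁ (q.1+q.2.1) u₂‖)
        = ‖cQ β₂ γ₁ γ₂ x y z q‖ * (‖(Real.exp (-u₁):ℂ) * (u₁:ℂ)^(α-1)‖ * |u₁|^(q.1+q.2.2)) *
            Real.Gamma (β₁.re + ((q.1+q.2.1 : ℕ) : ℝ)) := by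
      intro q
      simp only [norm_mul]
      rw [MeasureTheory.integral_const_mul, normAF_integral β₁ hβ₁ (q.1+q.2.1),
        norm_AF_split α (q.1+q.2.2) u₁]
      simp only [norm_mul]
    have hSum : Summable (fun q : ℕ × ℕ × ℕ => ∫ u₂ in Set.Ioi (0:ℝ),
        ‖cQ β₂ γ₁ γ₂ x y z q * AF α (q.1+q.2.2) u₁ * AF β₁ (q.1+q.2.1) u₂‖) := by
      refine (summable_I β₂ γ₁ γ₂ x y z β₁.re hβ₁ hy |u₁|
        (‖(Real.exp (-u₁):ℂ) * (u₁:ℂ)^(α-1)‖) (abs_nonneg u₁) (norm_nonneg _)).congr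
        (fun q => ?_)
      exact (hnormint q).symm
    calc (∫ u₂ in Set.Ioi (0:ℝ),
        (Real.exp (-u₁ - u₂) : ℂ) * (u₁ : ℂ) ^ (α - 1) * (u₂ : ℂ) ^ (β₁ - 1) *
          hyp0F1 γ₁ (x * u₁ * u₂) * hyp1F1 β₂ γ₂ (y * u₂ + z * u₁))
        = ∫ u₂ in Set.Ioi (0:ℝ), ∑' q : ℕ × ℕ × ℕ, cQ β₂ γ₁ γ₂ x y z q *
            AF α (q.1+q.2.2) u₁ * AF β₁ (q.1+q.2.1) u₂ := by
          simp only [integrand_expand α β₁ β₂ γ₁ γ₂ x y z u₁]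
      _ = ∑' q : ℕ × ℕ × ℕ, ∫ u₂ in Set.Ioi (0:ℝ), cQ β₂ γ₁ γ₂ x y z q *
            AF α (q.1+q.2.2) u₁ * AF β₁ (q.1+q.2.1) u₂ :=
          (integral_tsum_of_summable_integral_norm hInt hSum).symm
      _ = ∑' q : ℕ × ℕ × ℕ, cQ β₂ γ₁ γ₂ x y z q *
          Complex.Gamma (β₁ + ((q.1 + q.2.1 : ℕ) : ℂ)) * AF α (q.1 + q.2.2) u₁ := by
          refine tsum_congr fun q => ?_
          rw [MeasureTheory.integral_const_mul, intGammaC_AF β₁ hβ₁ (q.1+q.2.1)]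
          ring
  have hInt2 : ∀ q : ℕ × ℕ × ℕ, Integrable
      (fun u₁ => cQ β₂ γ₁ γ₂ x y z q * Complex.Gamma (β₁ + ((q.1 + q.2.1 : ℕ) : ℂ)) *
        AF α (q.1 + q.2.2) u₁) (volume.restrict (Set.Ioi (0:ℝ))) := fun q =>
    (intGammaC_AF_integrable α hα (q.1+q.2.2)).const_mul _
  have hnorm2 : ∀ q : ℕ × ℕ × ℕ,
      (∫ u₁ in Set.Ioi (0:ℝ), ‖cQ β₂ γ₁ γ₂ x y z q *
        Complex.Gamma (β₁ + ((q.1 + q.2.1 : ℕ) : ℂ)) * AF α (q.1 + q.2.2) u₁‖)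
      = ‖cQ β₂ γ₁ γ₂ x y z q‖ * ‖Complex.Gamma (β₁ + ((q.1 + q.2.1 : ℕ) : ℂ))‖ *
          Real.Gamma (α.re + ((q.1 + q.2.2 : ℕ) : ℝ)) := by
    intro q
    simp only [norm_mul]
    rw [MeasureTheory.integral_const_mul, normAF_integral α hα (q.1+q.2.2)]
  have hSum2 : Summable (fun q : ℕ × ℕ × ℕ => ∫ u₁ in Set.Ioi (0:ℝ),
      ‖cQ β₂ γ₁ γ₂ x y z q * Complex.Gamma (β₁ + ((q.1 + q.2.1 : ℕ) : ℂ)) *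
        AF α (q.1 + q.2.2) u₁‖) :=
    (summable_V α β₁ β₂ γ₁ γ₂ x y z hα hβ₁ hx hy hz).congr (fun q => (hnorm2 q).symm)
  have step2 : (∫ u₁ in Set.Ioi (0:ℝ), ∫ u₂ in Set.Ioi (0:ℝ),
      (Real.exp (-u₁ - u₂) : ℂ) * (u₁ : ℂ) ^ (α - 1) * (u₂ : ℂ) ^ (β₁ - 1) *
        hyp0F1 γ₁ (x * u₁ * u₂) * hyp1F1 β₂ γ₂ (y * u₂ + z * u₁))
      = (∑' q : ℕ × ℕ × ℕ, SQ α β₁ β₂ γ₁ γ₂ x y z q) *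
          (Complex.Gamma α * Complex.Gamma β₁) := by
    calc (∫ u₁ in Set.Ioi (0:ℝ), ∫ u₂ in Set.Ioi (0:ℝ),
        (Real.exp (-u₁ - u₂) : ℂ) * (u₁ : ℂ) ^ (α - 1) * (u₂ : ℂ) ^ (β₁ - 1) *
          hyp0F1 γ₁ (x * u₁ * u₂) * hyp1F1 β₂ γ₂ (y * u₂ + z * u₁))
        = ∫ u₁ in Set.Ioi (0:ℝ), ∑' q : ℕ × ℕ × ℕ, cQ β₂ γ₁ γ₂ x y z q *
            Complex.Gamma (β₁ + ((q.1 + q.2.1 : ℕ) : ℂ)) * AF α (q.1 + q.2.2) u₁ := by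
          simp only [step1]
      _ = ∑' q : ℕ × ℕ × ℕ, ∫ u₁ in Set.Ioi (0:ℝ), cQ β₂ γ₁ γ₂ x y z q *
            Complex.Gamma (β₁ + ((q.1 + q.2.1 : ℕ) : ℂ)) * AF α (q.1 + q.2.2) u₁ :=
          (integral_tsum_of_summable_integral_norm hInt2 hSum2).symm
      _ = ∑' q : ℕ × ℕ × ℕ, cQ β₂ γ₁ γ₂ x y z q *
            Complex.Gamma (β₁ + ((q.1 + q.2.1 : ℕ) : ℂ)) *
            Complex.Gamma (α + ((q.1 + q.2.2 : ℕ) : ℂ)) := by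
          refine tsum_congr fun q => ?_
          rw [MeasureTheory.integral_const_mul, intGammaC_AF α hα (q.1+q.2.2)]
      _ = ∑' q : ℕ × ℕ × ℕ, SQ α β₁ β₂ γ₁ γ₂ x y z q *
            (Complex.Gamma α * Complex.Gamma β₁) := by
          refine tsum_congr fun q => ?_
          rw [Complex.Gamma_shift β₁ hβ₁ (q.1+q.2.1), Complex.Gamma_shift α hα (q.1+q.2.2),
            SQ_eq]
          ring
      _ = (∑' q : ℕ × ℕ × ℕ, SQ α β₁ β₂ γ₁ γ₂ x y z q) *
          (Complex.Gamma α * Complex.Gamma β₁) := tsum_mul_right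
  have hS : Summable (SQ α β₁ β₂ γ₁ γ₂ x y z) :=
    (summable_SQ α β₁ β₂ γ₁ γ₂ x y z hx hy hz).of_norm
  have hLHS : srivastavaHA α β₁ β₂ γ₁ γ₂ x y z = ∑' q : ℕ × ℕ × ℕ,
      SQ α β₁ β₂ γ₁ γ₂ x y z q := by
    rw [srivastavaHA]
    calc (∑' m : ℕ, ∑' n : ℕ, ∑' p : ℕ,
        poch α (m + p) * poch β₁ (m + n) * poch β₂ (n + p) *
          (x : ℂ) ^ m * (y : ℂ) ^ n * (z : ℂ) ^ p /
          (poch γ₁ m * poch γ₂ (n + p) *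
            (Nat.factorial m : ℂ) * (Nat.factorial n : ℂ) * (Nat.factorial p : ℂ)))
        = ∑' m : ℕ, ∑' np : ℕ × ℕ, SQ α β₁ β₂ γ₁ γ₂ x y z (m, np) :=
          tsum_congr fun m => (Summable.tsum_prod (hS.prod_factor m)).symm
      _ = ∑' q : ℕ × ℕ × ℕ, SQ α β₁ β₂ γ₁ γ₂ x y z q := (Summable.tsum_prod hS).symm
  rw [hLHS, step2]
  field_simp
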